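/- arXiv:1907.03751 — 4 statements merged into one kernel-verified Lean document; each statement's English description precedes it below -/
import Mathlib

section
/- If n ≥ 3, r and a are positive integers with r² ≡ -1 (mod n) and r·a ≡ a or -a (mod n), and 1 ≤ a ≤ ⌈n/2⌉ with a ≠ n (in particular a < n), then n is even, a is odd, and n = 2a. -/
/-- If n ≥ 3, r, a positive with r² ≡ -1 (mod n), r·a ≡ ±a (mod n),
1 ≤ a, r ≤ ⌈n/2⌉ and a ≠ n, then n is even, a is odd and n = 2a. -/
theorem stmt_0 (n a r : ℕ) (hn : 3 ≤ n) (ha1 : 1 ≤ a) (hr1 : 1 ≤ r)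
    (ha2 : a ≤ (n + 1) / 2) (hr2 : r ≤ (n + 1) / 2) (han : a ≠ n)
    (hr : Int.ModEq (n : ℤ) ((r : ℤ) ^ 2) (-1))
    (hra : Int.ModEq (n : ℤ) ((r : ℤ) * a) (a : ℤ) ∨
           Int.ModEq (n : ℤ) ((r : ℤ) * a) (-(a : ℤ))) :
    Even n ∧ Odd a ∧ n = 2 * a := by
  have hsq : Int.ModEq (n : ℤ) ((r : ℤ) ^ 2 * a) (-(a : ℤ)) := by
    simpa using hr.mul_right (a : ℤ)
  have h2 : Int.ModEq (n : ℤ) ((r : ℤ) ^ 2 * a) (a : ℤ) := by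
    rcases hra with h | h
    · calc ((r : ℤ) ^ 2 * a) = r * (r * a) := by ring
      _ ≡ r * a [ZMOD n] := h.mul_left _
      _ ≡ a [ZMOD n] := h
    · calc ((r : ℤ) ^ 2 * a) = r * (r * a) := by ring
      _ ≡ r * (-(a : ℤ)) [ZMOD n] := h.mul_left _
      _ = -(r * a) := by ring
      _ ≡ -(-(a : ℤ)) [ZMOD n] := h.neg
      _ = a := by ring
  have hdvdZ : ((n : ℤ)) ∣ 2 * a := by
    have := (h2.symm.trans hsq).dvd
    -- n ∣ -a - a = -(2a)
    have h3 : ((n : ℤ)) ∣ -(2 * a) := by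
      convert this using 1; ring
    exact (dvd_neg).mp h3
  have hdvd : n ∣ 2 * a := by exact_mod_cast hdvdZ
  obtain ⟨k, hk⟩ := hdvd
  have hk1 : k = 1 := by
    rcases Nat.lt_or_ge k 2 with h | h
    · interval_cases k <;> omega
    · have := Nat.mul_le_mul_left n h
      omega
  subst hk1
  have hn2a : n = 2 * a := by omega
  refine ⟨⟨a, by omega⟩, ?_, hn2a⟩
  rcases Nat.even_or_odd a with he | ho
  · exfalso
    obtain ⟨m, hm⟩ := he
    have h4 : ((4 : ℕ) : ℤ) ∣ (n : ℤ) := by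
      have : (4 : ℕ) ∣ n := ⟨m, by omega⟩
      exact_mod_cast this
    have hr4 : Int.ModEq (4 : ℤ) ((r : ℤ) ^ 2) (-1) :=
      hr.of_dvd (by exact_mod_cast h4)
    have : ((r : ℤ) : ZMod 4) ^ 2 = -1 := by
      have := (ZMod.intCast_eq_intCast_iff' _ _ _).mpr hr4
      push_cast at this ⊢
      simpa using this
    have hall : ∀ x : ZMod 4, x ^ 2 ≠ -1 := by decide
    exact hall _ this
  · exact ho
end

section
/- Let n ≥ 3, 1 ≤ a, r ≤ n-1 with r² ≡ 1 (mod n) and r·a ≡ -a (mod n). Define maps ρ and δ on the vertex set V = {A_i, B_i : i ∈ ℤ_n} of the rose window graph R_n(a,r) by ρ(A_i)=A_{i+1}, ρ(B_i)=B_{i+1}, δ(A_i)=B_{ri}, δ(B_i)=A_{ri}. Then the group H = ⟨ρ, δ⟩ acts regularly on V; hence R_n(a,r) is a Cayley graph. -/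
/-- One-directional edge relation of the rose window graph: rim edges A_iA_{i+1},
inspoke edges A_iB_i, outspoke edges B_iA_{i+a}, hub edges B_iB_{i+r},
with A_i = Sum.inl i and B_i = Sum.inr i. -/
def rwRel (n : ℕ) (a r : ZMod n) : (ZMod n ⊕ ZMod n) → (ZMod n ⊕ ZMod n) → Prop
  | Sum.inl i, Sum.inl j => j = i + 1      -- rim
  | Sum.inl i, Sum.inr j => j = i          -- inspoke
  | Sum.inr i, Sum.inl j => j = i + a      -- outspoke
  | Sum.inr i, Sum.inr j => j = i + r      -- hub

/-- The rose window graph R_n(a,r). -/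
def roseWindow (n : ℕ) (a r : ZMod n) : SimpleGraph (ZMod n ⊕ ZMod n) :=
  SimpleGraph.fromRel (rwRel n a r)

section Aux
variable {n : ℕ} {a r : ZMod n}

lemma rwRel_shift (k : ZMod n) {v w : ZMod n ⊕ ZMod n} (h : rwRel n a r v w) :
    rwRel n a r (Sum.map (· + k) (· + k) v) (Sum.map (· + k) (· + k) w) := by
  rcases v with i | i <;> rcases w with j | j <;>
    simp only [rwRel, Sum.map_inl, Sum.map_inr] at h ⊢ <;> linear_combination h

lemma rwRel_shift_iff (k : ZMod n) (v w : ZMod n ⊕ ZMod n) :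
    rwRel n a r (Sum.map (· + k) (· + k) v) (Sum.map (· + k) (· + k) w) ↔ rwRel n a r v w := by
  constructor
  · intro h
    have h2 := rwRel_shift (n := n) (a := a) (r := r) (-k) h
    rcases v with i | i <;> rcases w with j | j <;> simpa using h2
  · exact rwRel_shift k

def rwTau (n : ℕ) (a r : ZMod n) (k : ZMod n) : roseWindow n a r ≃g roseWindow n a r where
  toFun := Sum.map (· + k) (· + k)
  invFun := Sum.map (· + (-k)) (· + (-k))
  left_inv v := by rcases v with i | i <;> simp
  right_inv v := by rcases v with i | i <;> simp
  map_rel_iff' {v w} := by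
    have hinj : Function.Injective (Sum.map (· + k) (· + k) : ZMod n ⊕ ZMod n → ZMod n ⊕ ZMod n) :=
      Function.Injective.sumMap (add_left_injective k) (add_left_injective k)
    simp only [roseWindow, SimpleGraph.fromRel_adj, Equiv.coe_fn_mk]
    rw [rwRel_shift_iff, rwRel_shift_iff, hinj.ne_iff]
def dmap (n : ℕ) (r : ZMod n) : ZMod n ⊕ ZMod n → ZMod n ⊕ ZMod n
  | Sum.inl i => Sum.inr (r * i)
  | Sum.inr i => Sum.inl (r * i)

lemma dmap_dmap (hr : r ^ 2 = 1) (v : ZMod n ⊕ ZMod n) : dmap n r (dmap n r v) = v := by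
  rcases v with i | i <;> simp only [dmap, Sum.inl.injEq, Sum.inr.injEq] <;>
    linear_combination i * hr

lemma rwRel_dmap (hr : r ^ 2 = 1) (hra : r * a = -a) {v w : ZMod n ⊕ ZMod n}
    (h : rwRel n a r v w) :
    rwRel n a r (dmap n r v) (dmap n r w) ∨ rwRel n a r (dmap n r w) (dmap n r v) := by
  rcases v with i | i <;> rcases w with j | j <;> simp only [rwRel, dmap] at h ⊢
  · left; linear_combination r * h
  · right; linear_combination (-r) * h
  · right; linear_combination (-r) * h - hra
  · left; linear_combination r * h + hr

lemma rwRel_dmap_iff (hr : r ^ 2 = 1) (hra : r * a = -a) (v w : ZMod n ⊕ ZMod n) :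
    (rwRel n a r (dmap n r v) (dmap n r w) ∨ rwRel n a r (dmap n r w) (dmap n r v)) ↔
      (rwRel n a r v w ∨ rwRel n a r w v) := by
  constructor
  · rintro (h | h)
    · have h2 := rwRel_dmap hr hra h
      rwa [dmap_dmap hr, dmap_dmap hr] at h2
    · have h2 := rwRel_dmap hr hra h
      rw [dmap_dmap hr, dmap_dmap hr] at h2
      exact h2.symm
  · rintro (h | h)
    · exact rwRel_dmap hr hra h
    · exact (rwRel_dmap hr hra h).symm

def rwDelta (n : ℕ) (a r : ZMod n) (hr : r ^ 2 = 1) (hra : r * a = -a) :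
    roseWindow n a r ≃g roseWindow n a r where
  toFun := dmap n r
  invFun := dmap n r
  left_inv := dmap_dmap hr
  right_inv := dmap_dmap hr
  map_rel_iff' {v w} := by
    have hinj : Function.Injective (dmap n r) :=
      Function.LeftInverse.injective (dmap_dmap hr)
    simp only [roseWindow, SimpleGraph.fromRel_adj, Equiv.coe_fn_mk]
    rw [rwRel_dmap_iff hr hra, hinj.ne_iff]
@[simp] lemma rwTau_inl (k i : ZMod n) : rwTau n a r k (Sum.inl i) = Sum.inl (i + k) := rfl
@[simp] lemma rwTau_inr (k i : ZMod n) : rwTau n a r k (Sum.inr i) = Sum.inr (i + k) := rfl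

variable (hr : r ^ 2 = 1) (hra : r * a = -a)

@[simp] lemma rwDelta_inl (i : ZMod n) :
    rwDelta n a r hr hra (Sum.inl i) = Sum.inr (r * i) := rfl
@[simp] lemma rwDelta_inr (i : ZMod n) :
    rwDelta n a r hr hra (Sum.inr i) = Sum.inl (r * i) := rfl

lemma rwTau_mul (k l : ZMod n) : rwTau n a r k * rwTau n a r l = rwTau n a r (l + k) := by
  apply DFunLike.ext
  rintro (i | i) <;> simp [RelIso.mul_apply, add_assoc]

lemma rwTau_zero : rwTau n a r 0 = 1 := by
  apply DFunLike.ext; rintro (i | i) <;> simp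

lemma rwDelta_mul_rwTau (k : ZMod n) :
    rwDelta n a r hr hra * rwTau n a r k = rwTau n a r (r * k) * rwDelta n a r hr hra := by
  apply DFunLike.ext
  rintro (i | i) <;> simp [RelIso.mul_apply, mul_add]

lemma rwDelta_sq : rwDelta n a r hr hra * rwDelta n a r hr hra = 1 := by
  apply DFunLike.ext
  rintro (i | i) <;> simp only [RelIso.mul_apply, rwDelta_inl, rwDelta_inr, RelIso.coe_one,
    id_eq, Sum.inl.injEq, Sum.inr.injEq] <;> linear_combination i * hr
lemma closure_form {h : roseWindow n a r ≃g roseWindow n a r}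
    (hh : h ∈ Subgroup.closure {rwTau n a r 1, rwDelta n a r hr hra}) :
    ∃ k : ZMod n, h = rwTau n a r k ∨ h = rwTau n a r k * rwDelta n a r hr hra := by
  induction hh using Subgroup.closure_induction with
  | mem x hx =>
    rcases hx with hx | hx
    · exact ⟨1, Or.inl hx⟩
    · exact ⟨0, Or.inr (by rw [hx, rwTau_zero, one_mul])⟩
  | one => exact ⟨0, Or.inl (rwTau_zero).symm⟩
  | mul x y hx hy ihx ihy =>
    obtain ⟨k, hk⟩ := ihx
    obtain ⟨l, hl⟩ := ihy
    rcases hk with hk | hk <;> rcases hl with hl | hl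
    · exact ⟨l + k, Or.inl (by rw [hk, hl, rwTau_mul])⟩
    · exact ⟨l + k, Or.inr (by rw [hk, hl, ← mul_assoc, rwTau_mul])⟩
    · refine ⟨r * l + k, Or.inr ?_⟩
      rw [hk, hl, mul_assoc, rwDelta_mul_rwTau, ← mul_assoc, rwTau_mul]
    · refine ⟨r * l + k, Or.inl ?_⟩
      rw [hk, hl, mul_assoc, ← mul_assoc (rwDelta n a r hr hra), rwDelta_mul_rwTau,
        mul_assoc, rwDelta_sq, mul_one, rwTau_mul]
  | inv x hx ihx =>
    obtain ⟨k, hk⟩ := ihx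
    rcases hk with hk | hk
    · refine ⟨-k, Or.inl ?_⟩
      rw [hk]
      refine (inv_eq_of_mul_eq_one_right ?_).symm.symm
      · rw [rwTau_mul, neg_add_cancel, rwTau_zero]
    · refine ⟨-(r * k), Or.inr ?_⟩
      rw [hk]
      apply inv_eq_of_mul_eq_one_right
      rw [mul_assoc, ← mul_assoc (rwDelta n a r hr hra), rwDelta_mul_rwTau, mul_assoc,
        rwDelta_sq, mul_one, rwTau_mul]
      have : r * -(r * k) + k = 0 := by linear_combination (-k) * hr
      rw [this, rwTau_zero]

lemma rwTau_mem (hn0 : n ≠ 0) (k : ZMod n) :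
    rwTau n a r k ∈ Subgroup.closure {rwTau n a r 1, rwDelta n a r hr hra} := by
  haveI : NeZero n := ⟨hn0⟩
  have key : ∀ m : ℕ, rwTau n a r (m : ZMod n) ∈
      Subgroup.closure {rwTau n a r 1, rwDelta n a r hr hra} := by
    intro m
    induction m with
    | zero => simpa [rwTau_zero] using Subgroup.one_mem _
    | succ m ih =>
      have heq : rwTau n a r ((m + 1 : ℕ) : ZMod n)
          = rwTau n a r (m : ZMod n) * rwTau n a r 1 := by
        rw [rwTau_mul]; push_cast; rw [add_comm]
      rw [heq]
      exact Subgroup.mul_mem _ ih (Subgroup.subset_closure (Set.mem_insert _ _))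
  have : ((k.val : ℕ) : ZMod n) = k := ZMod.natCast_rightInverse k
  rw [← this]
  exact key k.val

lemma rwSigma_mem (hn0 : n ≠ 0) (k : ZMod n) :
    rwTau n a r k * rwDelta n a r hr hra ∈
      Subgroup.closure {rwTau n a r 1, rwDelta n a r hr hra} := by
  exact Subgroup.mul_mem _ (rwTau_mem hr hra hn0 k)
    (Subgroup.subset_closure (Set.mem_insert_of_mem _ rfl))

end Aux

/-- If r² ≡ 1 (mod n) and r·a ≡ -a (mod n), then there are graph
automorphisms ρ, δ of R_n(a,r) given by ρ(A_i)=A_{i+1}, ρ(B_i)=B_{i+1},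
δ(A_i)=B_{ri}, δ(B_i)=A_{ri}, and the subgroup H = ⟨ρ, δ⟩ of the automorphism
group acts regularly on the vertices; hence R_n(a,r) is a Cayley graph. -/
theorem stmt_8 (n : ℕ) (hn : 3 ≤ n) (a r : ℕ) (ha : 1 ≤ a) (han : a ≤ n - 1)
    (hr1 : 1 ≤ r) (hrn : r ≤ n - 1)
    (hr : ((r : ZMod n)) ^ 2 = 1) (hra : (r : ZMod n) * a = -(a : ZMod n)) :
    ∃ ρ δ : roseWindow n a r ≃g roseWindow n a r,
      (∀ i : ZMod n, ρ (Sum.inl i) = Sum.inl (i + 1)) ∧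
      (∀ i : ZMod n, ρ (Sum.inr i) = Sum.inr (i + 1)) ∧
      (∀ i : ZMod n, δ (Sum.inl i) = Sum.inr ((r : ZMod n) * i)) ∧
      (∀ i : ZMod n, δ (Sum.inr i) = Sum.inl ((r : ZMod n) * i)) ∧
      ∀ v w : ZMod n ⊕ ZMod n,
        ∃! h : (roseWindow n a r ≃g roseWindow n a r),
          h ∈ Subgroup.closure {ρ, δ} ∧ h v = w := by
  have hn0 : n ≠ 0 := by omega
  set R : ZMod n := (r : ZMod n) with hR
  set A : ZMod n := (a : ZMod n) with hA
  refine ⟨rwTau n A R 1, rwDelta n A R hr hra, fun i => rfl, fun i => rfl,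
    fun i => rfl, fun i => rfl, fun v w => ?_⟩
  rcases v with i | i <;> rcases w with j | j
  · -- A_i ↦ A_j
    refine ⟨rwTau n A R (j - i), ⟨rwTau_mem hr hra hn0 _, by simp⟩, ?_⟩
    rintro h ⟨hm, hv⟩
    obtain ⟨k, hk | hk⟩ := closure_form hr hra hm
    · subst hk
      simp only [rwTau_inl, Sum.inl.injEq] at hv
      have : k = j - i := by linear_combination hv
      rw [this]
    · subst hk
      simp [RelIso.mul_apply] at hv
  · -- A_i ↦ B_j
    refine ⟨rwTau n A R (j - R * i) * rwDelta n A R hr hra,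
      ⟨rwSigma_mem hr hra hn0 _, by simp [RelIso.mul_apply]⟩, ?_⟩
    rintro h ⟨hm, hv⟩
    obtain ⟨k, hk | hk⟩ := closure_form hr hra hm
    · subst hk; simp at hv
    · subst hk
      simp only [RelIso.mul_apply, rwDelta_inl, rwTau_inr, Sum.inr.injEq] at hv
      have : k = j - R * i := by linear_combination hv
      rw [this]
  · -- B_i ↦ A_j
    refine ⟨rwTau n A R (j - R * i) * rwDelta n A R hr hra,
      ⟨rwSigma_mem hr hra hn0 _, by simp [RelIso.mul_apply]⟩, ?_⟩
    rintro h ⟨hm, hv⟩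
    obtain ⟨k, hk | hk⟩ := closure_form hr hra hm
    · subst hk; simp at hv
    · subst hk
      simp only [RelIso.mul_apply, rwDelta_inr, rwTau_inl, Sum.inl.injEq] at hv
      have : k = j - R * i := by linear_combination hv
      rw [this]
  · -- B_i ↦ B_j
    refine ⟨rwTau n A R (j - i), ⟨rwTau_mem hr hra hn0 _, by simp⟩, ?_⟩
    rintro h ⟨hm, hv⟩
    obtain ⟨k, hk | hk⟩ := closure_form hr hra hm
    · subst hk
      simp only [rwTau_inr, Sum.inr.injEq] at hv
      have : k = j - i := by linear_combination hv
      rw [this]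
    · subst hk
      simp [RelIso.mul_apply] at hv
end

section
/- If gcd(n, r) = 1, then the map ζ with ζ(A_i) = B_{-i·r⁻¹}, ζ(B_i) = A_{-i·r⁻¹} (r⁻¹ the inverse of r mod n) is a graph isomorphism from R_n(a, r) to R_n(a·r⁻¹, r⁻¹). -/
/-- If r is invertible mod n (gcd(n,r)=1), then
ζ(A_i) = B_{-i·r⁻¹}, ζ(B_i) = A_{-i·r⁻¹} is a graph isomorphism from
R_n(a,r) to R_n(a·r⁻¹, r⁻¹). -/
theorem stmt_12 (n : ℕ) (a r : ZMod n) (hr : IsUnit r) :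
    ∃ ζ : roseWindow n a r ≃g roseWindow n (a * r⁻¹) r⁻¹,
      (∀ i : ZMod n, ζ (Sum.inl i) = Sum.inr (-i * r⁻¹)) ∧
      (∀ i : ZMod n, ζ (Sum.inr i) = Sum.inl (-i * r⁻¹)) := by
  have h1 : r⁻¹ * r = 1 := ZMod.inv_mul_of_unit r hr
  have h2 : r * r⁻¹ = 1 := ZMod.mul_inv_of_unit r hr
  have cancel : ∀ u v : ZMod n, u * r⁻¹ = v * r⁻¹ ↔ u = v := by
    intro u v
    constructor
    · intro h
      have := congrArg (· * r) h
      simp only [mul_assoc, h1, mul_one] at this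
      exact this
    · intro h; rw [h]
  have key : ∀ i j c : ZMod n, (-j * r⁻¹ = -i * r⁻¹ + c * r⁻¹) ↔ (i = j + c) := by
    intro i j c
    rw [show -i * r⁻¹ + c * r⁻¹ = (-i + c) * r⁻¹ by ring, cancel]
    constructor <;> intro h <;> linear_combination h
  have key1 : ∀ i j : ZMod n, (-j * r⁻¹ = -i * r⁻¹ + r⁻¹) ↔ (i = j + 1) := by
    intro i j; have := key i j 1; rwa [one_mul] at this
  have keyr : ∀ i j : ZMod n, (-j * r⁻¹ = -i * r⁻¹ + 1) ↔ (i = j + r) := by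
    intro i j; have := key i j r; rwa [h2] at this
  have key0 : ∀ i j : ZMod n, (-j * r⁻¹ = -i * r⁻¹) ↔ (i = j) := by
    intro i j; rw [cancel, neg_inj, eq_comm]
  have keyne : ∀ i j : ZMod n, (¬ -i * r⁻¹ = -j * r⁻¹) ↔ ¬ i = j := by
    intro i j; rw [not_iff_not, cancel, neg_inj]
  refine ⟨⟨⟨fun x => match x with
      | Sum.inl i => Sum.inr (-i * r⁻¹)
      | Sum.inr i => Sum.inl (-i * r⁻¹),
    fun x => match x with
      | Sum.inl j => Sum.inr (-j * r)
      | Sum.inr j => Sum.inl (-j * r),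
    ?_, ?_⟩, ?_⟩, fun i => rfl, fun i => rfl⟩
  · rintro (i | i) <;> simp only <;>
      · rw [show -(-i * r⁻¹) * r = i * (r⁻¹ * r) by ring, h1, mul_one]
  · rintro (j | j) <;> simp only <;>
      · rw [show -(-j * r) * r⁻¹ = j * (r * r⁻¹) by ring, h2, mul_one]
  · rintro (i | i) (j | j) <;>
      simp only [Equiv.coe_fn_mk, roseWindow, SimpleGraph.fromRel_adj, rwRel, ne_eq,
        Sum.inl.injEq, Sum.inr.injEq, reduceCtorEq, not_false_eq_true, true_and]
    · rw [keyne i j, key1 i j, key1 j i]; tauto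
    · rw [key i j a, key0 j i]; tauto
    · rw [key j i a, key0 i j]; tauto
    · rw [keyne i j, keyr i j, keyr j i]; tauto
end

section
/- Let n = 12m with m ≡ 2 (mod 12), and let β = ρ^{3m/2}, where ρ generates a cyclic group of order n. Then β has order 8, and for γ satisfying γ² = ρ^{4m+4}, the elements ρ^{4(m+1)t + 3j·m/2} for 0 ≤ t ≤ (m-1)/2 (integer t with 2t ≤ m-1) and j ∈ {0,…,7} equal the identity only when t = 0 and j = 0. -/
/-- Let n = 12m with m ≡ 2 (mod 12). Then β = ρ^{3m/2} (ρ a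
generator of the cyclic group of order n, here modelled additively as ZMod n)
has order 8, and ρ^{4(m+1)t + 3j·m/2} = 1 with 0 ≤ 2t ≤ m-1 and 0 ≤ j ≤ 7
forces t = 0 and j = 0; equivalently, if 12m ∣ 4(m+1)t + 3j(m/2) then
t = 0 and j = 0. -/
theorem stmt_19 (m : ℕ) (hm : m % 12 = 2) :
    addOrderOf ((3 * m / 2 : ℕ) : ZMod (12 * m)) = 8 ∧
    ∀ t j : ℕ, 2 * t ≤ m - 1 → j ≤ 7 →
      12 * m ∣ 4 * (m + 1) * t + 3 * j * (m / 2) → t = 0 ∧ j = 0 := by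
  obtain ⟨l, rfl⟩ : ∃ l, m = 12 * l + 2 := ⟨m / 12, by omega⟩
  constructor
  · have h1 : 3 * (12 * l + 2) / 2 = 18 * l + 3 := by omega
    rw [h1]
    haveI : NeZero (12 * (12 * l + 2)) := ⟨by positivity⟩
    rw [ZMod.addOrderOf_coe]
    have h2 : Nat.gcd (12 * (12 * l + 2)) (18 * l + 3) = 18 * l + 3 :=
      Nat.gcd_eq_right ⟨8, by ring⟩
    rw [h2, show 12 * (12 * l + 2) = 8 * (18 * l + 3) from by ring,
      Nat.mul_div_cancel _ (by omega : 0 < 18 * l + 3)]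
    positivity
  · intro t j ht hj hdvd
    have hhalf : (12 * l + 2) / 2 = 6 * l + 1 := by omega
    rw [hhalf] at hdvd
    -- coprimality facts
    have hco3 : Nat.Coprime (6 * l + 1) 3 := by
      rw [Nat.coprime_comm]
      exact (Nat.Prime.coprime_iff_not_dvd (by norm_num)).mpr (by omega)
    have hco164 : Nat.Coprime (6 * l + 1) (16 * l + 4) := by
      set g := Nat.gcd (6 * l + 1) (16 * l + 4) with hg
      have hg1 : g ∣ 6 * l + 1 := Nat.gcd_dvd_left _ _
      have hg2 : g ∣ 16 * l + 4 := Nat.gcd_dvd_right _ _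
      have hg4 : g ∣ 4 := by
        have h3 : g ∣ 3 * (16 * l + 4) := Dvd.dvd.mul_left hg2 3
        have h8 : g ∣ 8 * (6 * l + 1) := Dvd.dvd.mul_left hg1 8
        have := Nat.dvd_sub h3 h8
        simpa [show 3 * (16 * l + 4) - 8 * (6 * l + 1) = 4 by omega] using this
      have hgpos : 0 < g := Nat.pos_of_dvd_of_pos hg1 (by omega)
      have hgle : g ≤ 4 := Nat.le_of_dvd (by norm_num) hg4
      interval_cases g <;> omega
    -- derive (6l+1) ∣ t
    have hd1 : (6 * l + 1) ∣ 4 * (12 * l + 2 + 1) * t + 3 * j * (6 * l + 1) :=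
      dvd_trans ⟨24, by ring⟩ hdvd
    rw [show 4 * (12 * l + 2 + 1) * t + 3 * j * (6 * l + 1)
        = (18 * l + 3) * j + 3 * ((16 * l + 4) * t) from by ring] at hd1
    have hadd : (6 * l + 1) ∣ (18 * l + 3) * j := ⟨3 * j, by ring⟩
    have hd2 : (6 * l + 1) ∣ 3 * ((16 * l + 4) * t) :=
      (Nat.dvd_add_right hadd).mp hd1
    have hd3 : (6 * l + 1) ∣ (16 * l + 4) * t := hco3.dvd_of_dvd_mul_left hd2
    have hd4 : (6 * l + 1) ∣ t := hco164.dvd_of_dvd_mul_left hd3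
    have ht0 : t = 0 := Nat.eq_zero_of_dvd_of_lt hd4 (by omega)
    subst ht0
    refine ⟨rfl, ?_⟩
    -- now 8 ∣ j
    rw [show 4 * (12 * l + 2 + 1) * 0 + 3 * j * (6 * l + 1)
        = (3 * (6 * l + 1)) * j from by ring,
      show 12 * (12 * l + 2) = (3 * (6 * l + 1)) * 8 from by ring] at hdvd
    have h8 : 8 ∣ j := (Nat.mul_dvd_mul_iff_left (by positivity : 0 < 3 * (6 * l + 1))).mp hdvd
    omega
end
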